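/- For a right R-module M, the subprojectivity domain of M is closed under quotients if and only if M is projective. -/

import Mathlib

/-- `M` is `N`-subprojective: every homomorphism `M → N` lifts through every
epimorphism onto `N`. -/
def Subprojective (R : Type) [Ring R] (M N : Type) [AddCommGroup M] [Module R M]
    [AddCommGroup N] [Module R N] : Prop :=
  ∀ (B : Type) [AddCommGroup B] [Module R B] (g : B →ₗ[R] N),
    Function.Surjective g → ∀ f : M →ₗ[R] N, ∃ h : M →ₗ[R] B, g ∘ₗ h = f

/-- Every module is subprojective relative to a projective module. -/
lemma subprojective_of_projective (R : Type) [Ring R] (M N : Type) [AddCommGroup M]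
    [Module R M] [AddCommGroup N] [Module R N] [Module.Projective R N] :
    Subprojective R M N := by
  intro B _ _ g hg f
  obtain ⟨s, hs⟩ := Module.projective_lifting_property g LinearMap.id hg
  exact ⟨s ∘ₗ f, by rw [← LinearMap.comp_assoc, hs, LinearMap.id_comp]⟩

theorem stmt_11 (R : Type) [Ring R] (M : Type) [AddCommGroup M] [Module R M] :
    (∀ (N : Type) (_ : AddCommGroup N) (_ : Module R N),
      Subprojective R M N → ∀ S : Submodule R N, Subprojective R M (N ⧸ S)) ↔
      Module.Projective R M := by
  constructor
  · intro H
    set F := M →₀ R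
    set tot : F →ₗ[R] M := Finsupp.linearCombination R (id : M → M)
    have htot : Function.Surjective tot :=
      Finsupp.linearCombination_id_surjective R M
    set K := LinearMap.ker tot
    have hsub : Subprojective R M (F ⧸ K) :=
      H F inferInstance inferInstance (subprojective_of_projective R M F) K
    set e : (F ⧸ K) ≃ₗ[R] M := tot.quotKerEquivOfSurjective htot
    obtain ⟨h, hh⟩ := hsub F K.mkQ K.mkQ_surjective (e.symm : M →ₗ[R] F ⧸ K)
    refine Module.projective_def'.mpr ⟨h, ?_⟩
    have he : ∀ x : F, e (K.mkQ x) = tot x := fun x => rfl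
    ext m
    have := congrArg (fun φ => e (φ m)) hh
    simpa [he] using (he (h m)).symm.trans this
  · intro hP N _ _ _ S B _ _ g hg f
    exact Module.projective_lifting_property g f hg
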